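/- arXiv:1211.6778 — 4 statements merged into one kernel-verified Lean document; each statement's English description precedes it below -/
import Mathlib

section
/- The infinite-buffer tandem recursion admits the closed-form max-plus representation: D(n,k) = max over all nondecreasing lattice paths from (0,1) to (n,k) of the sum of τ along the path, i.e., D(n,k) = max over sequences 1 = j_0 ≤ j_1 ≤ ... ≤ j_n = k of Σ_{m=0}^{n} Σ_{j=j_{m-1}}^{j_m} τ(m,j) appropriately interpreted (with j_{-1} = 1); equivalently, D(n,k) = max_{1 ≤ j ≤ k} ( D(n-1,j) + Σ_{i=j}^{k} τ(n,i) ). -/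
private lemma tandem_nonneg
    (D τ : ℤ → ℤ → ℝ)
    (hbd : ∀ n k : ℤ, k ≤ 0 → D n k = 0)
    (hneg : ∀ n k : ℤ, n < 0 → D n k = 0)
    (hτ : ∀ n k : ℤ, 0 ≤ τ n k)
    (hrec : ∀ n k : ℤ, 0 ≤ n → 1 ≤ k →
      D n k = max (D (n-1) k) (D n (k-1)) + τ n k)
    (n : ℤ) : ∀ k : ℤ, 0 ≤ D n k := by
  intro k
  rcases lt_or_ge n 0 with hn | hn
  · rw [hneg n k hn]
  rcases le_or_gt k 0 with h | h
  · rw [hbd n k h]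
  have h1 : (1:ℤ) ≤ k := h
  refine Int.le_induction (motive := fun m _ => 0 ≤ D n m) ?_ ?_ k h1
  · show 0 ≤ D n 1
    rw [hrec n 1 hn le_rfl]
    have h0 : D n (1 - 1) = 0 := hbd n 0 le_rfl
    have hmax : (0:ℝ) ≤ max (D (n-1) 1) (D n (1-1)) := by
      rw [h0]; exact le_max_right _ _
    linarith [hτ n 1]
  · intro m hm ih
    show 0 ≤ D n (m+1)
    rw [hrec n (m+1) hn (by linarith)]
    have hmm : D n (m + 1 - 1) = D n m := by norm_num
    have hle : D n m ≤ max (D (n-1) (m+1)) (D n (m+1-1)) := by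
      rw [hmm]; exact le_max_right _ _
    linarith [hτ n (m+1)]

private lemma Icc_int_insert (a b : ℤ) (h : a ≤ b + 1) :
    Finset.Icc a (b + 1) = insert (b + 1) (Finset.Icc a b) := by
  ext x
  simp only [Finset.mem_Icc, Finset.mem_insert]
  omega

/-- One-step max-plus unfolding of the infinite-buffer tandem recursion:
    D(n,k) = max_{1 ≤ j ≤ k} ( D(n-1,j) + Σ_{i=j}^{k} τ(n,i) ). -/
theorem tandem_maxplus_unfolding
    (D τ : ℤ → ℤ → ℝ)
    (hbd : ∀ n k : ℤ, k ≤ 0 → D n k = 0)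
    (hneg : ∀ n k : ℤ, n < 0 → D n k = 0)
    (hτ : ∀ n k : ℤ, 0 ≤ τ n k)
    (hrec : ∀ n k : ℤ, 0 ≤ n → 1 ≤ k →
      D n k = max (D (n-1) k) (D n (k-1)) + τ n k)
    (n k : ℤ) (hn : 0 ≤ n) (hk : 1 ≤ k) :
    D n k = (Finset.Icc (1:ℤ) k).sup'
      (Finset.nonempty_Icc.mpr hk)
      (fun j => D (n-1) j + ∑ i ∈ Finset.Icc j k, τ n i) := by
  have hDnn : ∀ m j : ℤ, 0 ≤ D m j :=
    fun m => tandem_nonneg D τ hbd hneg hτ hrec m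
  have key : ∀ m : ℤ, 1 ≤ m → ∀ hm : 1 ≤ m,
      D n m = (Finset.Icc (1:ℤ) m).sup'
        (Finset.nonempty_Icc.mpr hm)
        (fun j => D (n-1) j + ∑ i ∈ Finset.Icc j m, τ n i) := by
    intro m hm1
    refine Int.le_induction (motive := fun m _ => ∀ hm : 1 ≤ m, D n m = (Finset.Icc (1:ℤ) m).sup' (Finset.nonempty_Icc.mpr hm) (fun j => D (n-1) j + ∑ i ∈ Finset.Icc j m, τ n i)) ?_ ?_ m hm1
    · intro _
      have hsingle : Finset.Icc (1:ℤ) 1 = {1} := Finset.Icc_self 1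
      rw [hrec n 1 hn le_rfl]
      have h0 : D n (1 - 1) = 0 := hbd n 0 le_rfl
      rw [h0, max_eq_left (hDnn (n-1) 1)]
      rw [Finset.sup'_congr _ hsingle (fun j _ => rfl)]
      simp [hsingle]
    · intro k hk1 ih _
      have hne : (Finset.Icc (1:ℤ) k).Nonempty := Finset.nonempty_Icc.mpr hk1
      have hins : Finset.Icc (1:ℤ) (k+1) = insert (k+1) (Finset.Icc 1 k) :=
        Icc_int_insert 1 k (by linarith)
      have hrw : D n (k+1) = max (D (n-1) (k+1) + τ n (k+1)) (D n k + τ n (k+1)) := by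
        rw [hrec n (k+1) hn (by linarith)]
        have : D n (k+1-1) = D n k := by norm_num
        rw [this, max_add_add_right]
      have hsum1 : ∀ j : ℤ, j ≤ k →
          (∑ i ∈ Finset.Icc j (k+1), τ n i) = (∑ i ∈ Finset.Icc j k, τ n i) + τ n (k+1) := by
        intro j hj
        rw [Icc_int_insert j k (by linarith), Finset.sum_insert (by simp)]
        ring
      have hstep : D n k + τ n (k+1)
          = (Finset.Icc (1:ℤ) k).sup' hne
            (fun j => D (n-1) j + ∑ i ∈ Finset.Icc j (k+1), τ n i) := by
        rw [ih hk1, Finset.sup'_add]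
        apply Finset.sup'_congr _ rfl
        intro j hj
        rw [Finset.mem_Icc] at hj
        rw [hsum1 j hj.2]
        ring
      have htop : D (n-1) (k+1) + τ n (k+1)
          = D (n-1) (k+1) + ∑ i ∈ Finset.Icc (k+1) (k+1), τ n i := by
        simp
      calc D n (k+1) = max (D (n-1) (k+1) + τ n (k+1)) (D n k + τ n (k+1)) := hrw
        _ = max (D (n-1) (k+1) + ∑ i ∈ Finset.Icc (k+1) (k+1), τ n i)
              ((Finset.Icc (1:ℤ) k).sup' hne
                (fun j => D (n-1) j + ∑ i ∈ Finset.Icc j (k+1), τ n i)) := by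
            rw [htop, hstep]
        _ = _ := by
            rw [Finset.sup'_congr _ hins (fun j _ => rfl)]
            rw [Finset.sup'_insert]
  exact key k hk hk
end

section
/- Correctness of the in-place single-array algorithm: the sequential algorithm which initializes d(-1) = d(0) = ... = d(N) = 0 and, for i = 1, ..., K+N, iterates over j from max(1, i-N) to min(i, K) setting d(i-j) ← max(d(i-j-1), d(i-j)) + τ(i-j, j), terminates with d(n) = D(n,K) for every n = 0, 1, ..., N, where D is the solution of the tandem recursion D(n,k) = max(D(n-1,k), D(n,k-1)) + τ(n,k) with D(n,0)=0 and D(-1,k)=0. -/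
/-- One pass of the inner loop of the in-place algorithm at outer iteration `i`:
    for j = max(1, i-N), ..., min(i, K), set
    d(i-j) ← max(d(i-j-1), d(i-j)) + τ(i-j, j). -/
def innerLoop (τ : ℤ → ℤ → ℝ) (N K i : ℕ) (d : ℤ → ℝ) : ℤ → ℝ :=
  (List.range' (max 1 (i - N)) (min i K - max 1 (i - N) + 1)).foldl
    (fun d j =>
      Function.update d ((i : ℤ) - (j : ℤ))
        (max (d ((i : ℤ) - (j : ℤ) - 1)) (d ((i : ℤ) - (j : ℤ))) + τ ((i : ℤ) - (j : ℤ)) (j : ℤ)))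
    d

/-- The whole in-place algorithm: start from the zero array and run the
    outer loop for i = 1, ..., K+N. -/
def runAlgorithm (τ : ℤ → ℤ → ℝ) (N K : ℕ) : ℤ → ℝ :=
  (List.range' 1 (K + N)).foldl (fun d i => innerLoop τ N K i d) (fun _ => 0)

/-- Ideal state of the array after outer iteration `i`. -/
noncomputable def Fst (D : ℤ → ℤ → ℝ) (N K i : ℕ) : ℤ → ℝ :=
  fun n => if 0 ≤ n ∧ n ≤ (N : ℤ) then D n (min ((i : ℤ) - n) (K : ℤ)) else 0

/-- Ideal state of the array during outer iteration `i`, after the inner loop has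
    processed all j < c. -/
noncomputable def Gst (D : ℤ → ℤ → ℝ) (N K i c : ℕ) : ℤ → ℝ :=
  fun n => if (i : ℤ) - (c : ℤ) < n then Fst D N K i n else Fst D N K (i - 1) n

lemma inner_fold (D τ : ℤ → ℤ → ℝ) (N K : ℕ) (hNK : N < K)
    (hneg : ∀ n k : ℤ, n < 0 → D n k = 0)
    (hrec : ∀ n k : ℤ, 0 ≤ n → 1 ≤ k →
      D n k = max (D (n-1) k) (D n (k-1)) + τ n k)
    (i : ℕ) (hi1 : 1 ≤ i) :
    ∀ m c, max 1 (i - N) ≤ c → c + m = min i K + 1 →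
      (List.range' c m).foldl
        (fun d (j : ℕ) =>
          Function.update d ((i : ℤ) - (j : ℤ))
            (max (d ((i : ℤ) - (j : ℤ) - 1)) (d ((i : ℤ) - (j : ℤ))) + τ ((i : ℤ) - (j : ℤ)) (j : ℤ)))
        (Gst D N K i c) = Gst D N K i (c + m) := by
  intro m
  induction m with
  | zero => intro c _ _; simp [List.range']
  | succ m ih =>
    intro c hc hsum
    have hc1 : 1 ≤ c := le_trans (le_max_left _ _) hc
    have hci : c ≤ i := by omega
    have hcK : c ≤ K := by omega
    have hp0 : (0:ℤ) ≤ (i:ℤ) - c := by omega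
    have hpN : (i:ℤ) - c ≤ (N:ℤ) := by omega
    rw [List.range'_succ, List.foldl_cons]
    have hstep : (Function.update (Gst D N K i c) ((i:ℤ) - (c:ℤ))
        (max ((Gst D N K i c) ((i:ℤ) - (c:ℤ) - 1)) ((Gst D N K i c) ((i:ℤ) - (c:ℤ))) +
          τ ((i:ℤ) - (c:ℤ)) (c:ℤ)))
        = Gst D N K i (c + 1) := by
      funext n
      by_cases hn : n = (i:ℤ) - (c:ℤ)
      · subst hn
        rw [Function.update_self]
        have e1 : Gst D N K i (c+1) ((i:ℤ) - (c:ℤ)) = D ((i:ℤ) - c) (c:ℤ) := by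
          simp only [Gst, Fst]
          rw [if_pos (by push_cast; omega), if_pos ⟨hp0, hpN⟩]
          congr 1
          omega
        have e2 : Gst D N K i c ((i:ℤ) - (c:ℤ)) = D ((i:ℤ) - c) ((c:ℤ) - 1) := by
          simp only [Gst, Fst]
          rw [if_neg (by omega), if_pos ⟨hp0, hpN⟩]
          congr 1
          omega
        have e3 : Gst D N K i c ((i:ℤ) - (c:ℤ) - 1) = D ((i:ℤ) - c - 1) (c:ℤ) := by
          simp only [Gst, Fst]
          rw [if_neg (by omega)]
          by_cases hp1 : (1:ℤ) ≤ (i:ℤ) - c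
          · rw [if_pos ⟨by omega, by omega⟩]
            congr 1
            omega
          · rw [if_neg (by omega), hneg _ _ (by omega)]
        rw [e1, e2, e3, hrec ((i:ℤ) - c) (c:ℤ) hp0 (by exact_mod_cast hc1)]
      · rw [Function.update_of_ne hn]
        simp only [Gst]
        split_ifs with h1 h2 h2 <;> first | rfl | (exfalso; push_cast at h1 h2 ⊢; omega)
    rw [hstep]
    have h2 : c + 1 + m = c + (m + 1) := by omega
    rw [← h2]
    exact ih (c+1) (by omega) (by omega)

lemma inner_spec (D τ : ℤ → ℤ → ℝ) (N K : ℕ) (hNK : N < K)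
    (hbd : ∀ n k : ℤ, k ≤ 0 → D n k = 0)
    (hneg : ∀ n k : ℤ, n < 0 → D n k = 0)
    (hrec : ∀ n k : ℤ, 0 ≤ n → 1 ≤ k →
      D n k = max (D (n-1) k) (D n (k-1)) + τ n k)
    (i : ℕ) (hi1 : 1 ≤ i) (hiKN : i ≤ K + N) :
    innerLoop τ N K i (Fst D N K (i - 1)) = Fst D N K i := by
  have ha : max 1 (i - N) ≤ min i K := by omega
  have h0 : Gst D N K i (max 1 (i - N)) = Fst D N K (i - 1) := by
    funext n
    simp only [Gst]
    split_ifs with h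
    · simp only [Fst]
      split_ifs with h2
      · rw [hbd n _ (by omega), hbd n _ (by omega)]
      · rfl
    · rfl
  have h1 : Gst D N K i (min i K + 1) = Fst D N K i := by
    funext n
    simp only [Gst]
    split_ifs with h
    · rfl
    · simp only [Fst]
      split_ifs with h2
      · congr 1
        omega
      · rfl
  unfold innerLoop
  simp only [bind_pure_comp, List.map_eq_map, List.foldl_map]
  rw [← h0, inner_fold D τ N K hNK hneg hrec i hi1 _ _ le_rfl (by omega),
    show max 1 (i - N) + (min i K - max 1 (i - N) + 1) = min i K + 1 from by omega, h1]

/-- Correctness of the in-place single-array algorithm: upon termination,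
    d(n) = D(n,K) for all n = 0, ..., N. -/
theorem inplace_algorithm_correct
    (D τ : ℤ → ℤ → ℝ) (N K : ℕ) (hNK : N < K)
    (hbd : ∀ n k : ℤ, k ≤ 0 → D n k = 0)
    (hneg : ∀ n k : ℤ, n < 0 → D n k = 0)
    (hτ : ∀ n k : ℤ, 0 ≤ τ n k)
    (hrec : ∀ n k : ℤ, 0 ≤ n → 1 ≤ k →
      D n k = max (D (n-1) k) (D n (k-1)) + τ n k) :
    ∀ n : ℤ, 0 ≤ n → n ≤ (N : ℤ) → runAlgorithm τ N K n = D n (K : ℤ) := by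
  have outer : ∀ m, m ≤ K + N →
      (List.range' 1 m).foldl (fun d i => innerLoop τ N K i d) (Fst D N K 0) = Fst D N K m := by
    intro m
    induction m with
    | zero => intro _; simp
    | succ m ih =>
      intro hm
      rw [List.range'_concat, List.foldl_append, ih (by omega)]
      simp only [List.foldl_cons, List.foldl_nil]
      have := inner_spec D τ N K hNK hbd hneg hrec (m + 1) (by omega) (by omega)
      rw [show (m + 1) - 1 = m from by omega] at this
      rw [show 1 + 1 * m = m + 1 from by omega, this]
  intro n hn hnN
  have h0 : (fun _ : ℤ => (0:ℝ)) = Fst D N K 0 := by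
    funext x
    simp only [Fst]
    split_ifs with h
    · rw [hbd x _ (by omega)]
    · rfl
  have : runAlgorithm τ N K = Fst D N K (K + N) := by
    rw [runAlgorithm, h0, outer (K + N) le_rfl]
  rw [this]
  simp only [Fst]
  rw [if_pos ⟨hn, hnN⟩]
  congr 1
  omega
end

section
/- Communication blocking is at least as restrictive as manufacturing blocking: with the same service times τ ≥ 0 and buffer capacities m, the departure epochs satisfy D_M(n,k) ≤ D_C(n,k) for all n, k, where D_M is the solution of the manufacturing-blocking recursion and D_C of the communication-blocking recursion. -/
/-- Communication blocking is at least as restrictive as manufacturing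
    blocking: D_M(n,k) ≤ D_C(n,k). -/
theorem manufacturing_le_communication
    (N : ℕ) (m : ℤ → ℤ) (τ DM DC : ℤ → ℤ → ℝ)
    (hm : ∀ n : ℤ, 1 ≤ m n)
    (hτ : ∀ n k : ℤ, 0 ≤ τ n k)
    -- manufacturing blocking
    (hMbd : ∀ n k : ℤ, k ≤ 0 → DM n k = 0)
    (hMneg : ∀ n k : ℤ, n < 0 → DM n k = 0)
    (hMtop : ∀ n k : ℤ, (N : ℤ) < n → DM n k = 0)
    (hMrec : ∀ n k : ℤ, 0 ≤ n → n ≤ (N : ℤ) → 1 ≤ k →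
      DM n k = max (max (DM (n-1) k) (DM n (k-1)) + τ n k)
                   (DM (n+1) (k - m (n+1) - 1)))
    -- communication blocking
    (hCbd : ∀ n k : ℤ, k ≤ 0 → DC n k = 0)
    (hCneg : ∀ n k : ℤ, n < 0 → DC n k = 0)
    (hCtop : ∀ n k : ℤ, (N : ℤ) < n → DC n k = 0)
    (hCrec : ∀ n k : ℤ, 0 ≤ n → n ≤ (N : ℤ) → 1 ≤ k →
      DC n k = max (max (DC (n-1) k) (DC n (k-1)))
                   (DC (n+1) (k - m (n+1) - 1)) + τ n k) :
    ∀ n k : ℤ, DM n k ≤ DC n k := by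
  have key : ∀ K : ℕ, ∀ k : ℤ, k ≤ (K : ℤ) → ∀ n, DM n k ≤ DC n k := by
    intro K
    induction K with
    | zero =>
      intro k hk n
      rw [hMbd n k hk, hCbd n k hk]
    | succ K IH =>
      intro k hk n
      by_cases h0 : k ≤ 0
      · rw [hMbd n k h0, hCbd n k h0]
      push_neg at h0
      have hk1 : (1 : ℤ) ≤ k := h0
      have step : ∀ n : ℤ, DM (n-1) k ≤ DC (n-1) k → DM n k ≤ DC n k := by
        intro n hprev
        by_cases hn0 : n < 0
        · rw [hMneg n k hn0, hCneg n k hn0]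
        by_cases hnN : (N : ℤ) < n
        · rw [hMtop n k hnN, hCtop n k hnN]
        push_neg at hn0 hnN
        rw [hMrec n k hn0 hnN hk1, hCrec n k hn0 hnN hk1]
        have h1 : DM n (k-1) ≤ DC n (k-1) := IH (k-1) (by omega) n
        have h2 : DM (n+1) (k - m (n+1) - 1) ≤ DC (n+1) (k - m (n+1) - 1) := by
          apply IH
          have := hm (n+1); omega
        have hτn := hτ n k
        have hC2 : DC (n+1) (k - m (n+1) - 1) ≤
            max (max (DC (n-1) k) (DC n (k-1))) (DC (n+1) (k - m (n+1) - 1)) + τ n k := by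
          have := le_max_right (max (DC (n-1) k) (DC n (k-1))) (DC (n+1) (k - m (n+1) - 1))
          linarith
        apply max_le
        · have hmax : max (DM (n-1) k) (DM n (k-1)) ≤
              max (max (DC (n-1) k) (DC n (k-1))) (DC (n+1) (k - m (n+1) - 1)) :=
            le_trans (max_le_max hprev h1) (le_max_left _ _)
          linarith
        · exact le_trans h2 hC2
      have inner : ∀ M : ℕ, ∀ n : ℤ, n ≤ (M : ℤ) → DM n k ≤ DC n k := by
        intro M
        induction M with
        | zero =>
          intro n hn
          by_cases hneg : n < 0
          · rw [hMneg n k hneg, hCneg n k hneg]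
          have h0' : n = 0 := by omega
          subst h0'
          apply step
          rw [hMneg _ k (by norm_num), hCneg _ k (by norm_num)]
        | succ M IHM =>
          intro n hn
          by_cases hle : n ≤ (M : ℤ)
          · exact IHM n hle
          apply step
          apply IHM
          omega
      exact inner n.toNat n (Int.self_le_toNat n)
  intro n k
  exact key k.toNat k (Int.self_le_toNat k) n
end

section
/- Monotonicity of blocking in buffer sizes: if m(n) ≤ m'(n) for all n = 1, ..., N, then the manufacturing-blocking departure epochs satisfy D_{m'}(n,k) ≤ D_m(n,k) for all n, k, i.e., larger buffers yield earlier (or equal) departures. -/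
/-- Larger buffers yield earlier (or equal) departures under manufacturing
    blocking. -/
theorem buffer_monotonicity
    (N : ℕ) (m m' : ℤ → ℤ) (τ Dm Dm' : ℤ → ℤ → ℝ)
    (hm : ∀ n : ℤ, 1 ≤ m n) (hm' : ∀ n : ℤ, 1 ≤ m' n)
    (hτ : ∀ n k : ℤ, 0 ≤ τ n k)
    (hmono : ∀ n : ℤ, 1 ≤ n → n ≤ (N : ℤ) → m n ≤ m' n)
    -- recursion with buffers m
    (hbd : ∀ n k : ℤ, k ≤ 0 → Dm n k = 0)
    (hneg : ∀ n k : ℤ, n < 0 → Dm n k = 0)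
    (htop : ∀ n k : ℤ, (N : ℤ) < n → Dm n k = 0)
    (hrec : ∀ n k : ℤ, 0 ≤ n → n ≤ (N : ℤ) → 1 ≤ k →
      Dm n k = max (max (Dm (n-1) k) (Dm n (k-1)) + τ n k)
                   (Dm (n+1) (k - m (n+1) - 1)))
    -- recursion with buffers m'
    (hbd' : ∀ n k : ℤ, k ≤ 0 → Dm' n k = 0)
    (hneg' : ∀ n k : ℤ, n < 0 → Dm' n k = 0)
    (htop' : ∀ n k : ℤ, (N : ℤ) < n → Dm' n k = 0)
    (hrec' : ∀ n k : ℤ, 0 ≤ n → n ≤ (N : ℤ) → 1 ≤ k →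
      Dm' n k = max (max (Dm' (n-1) k) (Dm' n (k-1)) + τ n k)
                    (Dm' (n+1) (k - m' (n+1) - 1))) :
    ∀ n k : ℤ, Dm' n k ≤ Dm n k := by
  -- Monotonicity in k for a generic departure process (one step).
  have mono_step : ∀ (f : ℤ → ℤ) (D : ℤ → ℤ → ℝ),
      (∀ n k : ℤ, k ≤ 0 → D n k = 0) →
      (∀ n k : ℤ, n < 0 → D n k = 0) →
      (∀ n k : ℤ, (N : ℤ) < n → D n k = 0) →
      (∀ n k : ℤ, 0 ≤ n → n ≤ (N : ℤ) → 1 ≤ k →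
        D n k = max (max (D (n-1) k) (D n (k-1)) + τ n k)
                    (D (n+1) (k - f (n+1) - 1))) →
      ∀ (n k : ℤ), D n k ≤ D n (k+1) := by
    intro f D hb hn ht hr n k
    by_cases hk : k + 1 ≤ 0
    · rw [hb n k (by omega), hb n (k+1) hk]
    · by_cases h0 : 0 ≤ n
      · by_cases hN : n ≤ (N : ℤ)
        · rw [hr n (k+1) h0 hN (by omega)]
          have h1 : D n (k+1-1) = D n k := by norm_num
          have h2 : D n k ≤ max (D (n-1) (k+1)) (D n (k+1-1)) := by
            rw [h1]; exact le_max_right _ _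
          have h3 := hτ n (k+1)
          calc D n k ≤ max (D (n-1) (k+1)) (D n (k+1-1)) + τ n (k+1) := by linarith
            _ ≤ _ := le_max_left _ _
        · push_neg at hN
          rw [ht n k hN, ht n (k+1) hN]
      · push_neg at h0
        rw [hn n k h0, hn n (k+1) h0]
  -- Full monotonicity in k.
  have mono : ∀ (f : ℤ → ℤ) (D : ℤ → ℤ → ℝ),
      (∀ n k : ℤ, k ≤ 0 → D n k = 0) →
      (∀ n k : ℤ, n < 0 → D n k = 0) →
      (∀ n k : ℤ, (N : ℤ) < n → D n k = 0) →
      (∀ n k : ℤ, 0 ≤ n → n ≤ (N : ℤ) → 1 ≤ k →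
        D n k = max (max (D (n-1) k) (D n (k-1)) + τ n k)
                    (D (n+1) (k - f (n+1) - 1))) →
      ∀ (n j k : ℤ), j ≤ k → D n j ≤ D n k := by
    intro f D hb hn ht hr n j k hjk
    have key : ∀ d : ℕ, D n j ≤ D n (j + d) := by
      intro d
      induction d with
      | zero => simp
      | succ d ih =>
        have := mono_step f D hb hn ht hr n (j + d)
        push_cast
        push_cast at ih
        rw [show j + ((d : ℤ) + 1) = j + (d : ℤ) + 1 by ring]
        linarith
    have := key (k - j).toNat
    rwa [show j + ((k - j).toNat : ℤ) = k by omega] at this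
  -- Nonnegativity.
  have nonneg : ∀ (f : ℤ → ℤ) (D : ℤ → ℤ → ℝ),
      (∀ n k : ℤ, k ≤ 0 → D n k = 0) →
      (∀ n k : ℤ, n < 0 → D n k = 0) →
      (∀ n k : ℤ, (N : ℤ) < n → D n k = 0) →
      (∀ n k : ℤ, 0 ≤ n → n ≤ (N : ℤ) → 1 ≤ k →
        D n k = max (max (D (n-1) k) (D n (k-1)) + τ n k)
                    (D (n+1) (k - f (n+1) - 1))) →
      ∀ (n k : ℤ), 0 ≤ D n k := by
    intro f D hb hn ht hr n k
    rcases le_or_gt k 0 with h | h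
    · rw [hb n k h]
    · have := mono f D hb hn ht hr n 0 k (by omega)
      rw [hb n 0 le_rfl] at this
      exact this
  have monoM' := mono m' Dm' hbd' hneg' htop' hrec'
  have nonnegM := nonneg m Dm hbd hneg htop hrec
  -- Main claim by strong induction on k.toNat, then on n.toNat.
  have main : ∀ (K : ℕ) (k : ℤ), k.toNat = K → ∀ n, Dm' n k ≤ Dm n k := by
    intro K
    induction K using Nat.strong_induction_on with
    | _ K ihK =>
      intro k hkK n
      rcases le_or_gt k 0 with hk0 | hk0
      · rw [hbd' n k hk0]; exact nonnegM n k
      · -- k ≥ 1; induct on n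
        have inner : ∀ (M : ℕ) (n : ℤ), n.toNat = M → Dm' n k ≤ Dm n k := by
          intro M
          induction M using Nat.strong_induction_on with
          | _ M ihM =>
            intro n hnM
            rcases lt_or_ge n 0 with hn0 | hn0
            · rw [hneg' n k hn0]; exact nonnegM n k
            · rcases lt_or_ge (N : ℤ) n with hnN | hnN
              · rw [htop' n k hnN]; exact nonnegM n k
              · rw [hrec' n k hn0 hnN (by omega), hrec n k hn0 hnN (by omega)]
                have ha : Dm' (n-1) k ≤ Dm (n-1) k := by
                  rcases lt_or_ge (n-1) 0 with h | h
                  · rw [hneg' (n-1) k h]; exact nonnegM (n-1) k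
                  · exact ihM (n-1).toNat (by omega) (n-1) rfl
                have hb2 : Dm' n (k-1) ≤ Dm n (k-1) := by
                  exact ihK (k-1).toNat (by omega) (k-1) rfl n
                have hc : Dm' (n+1) (k - m' (n+1) - 1) ≤ Dm (n+1) (k - m (n+1) - 1) := by
                  rcases lt_or_ge (N : ℤ) (n+1) with h | h
                  · rw [htop' (n+1) _ h]; exact nonnegM _ _
                  · have hmm : m (n+1) ≤ m' (n+1) := hmono (n+1) (by omega) h
                    have step1 : Dm' (n+1) (k - m' (n+1) - 1) ≤ Dm' (n+1) (k - m (n+1) - 1) :=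
                      monoM' (n+1) _ _ (by omega)
                    have hj : (k - m (n+1) - 1).toNat < K := by
                      have := hm (n+1); omega
                    exact step1.trans (ihK (k - m (n+1) - 1).toNat hj _ rfl (n+1))
                exact max_le_max (add_le_add_left (max_le_max ha hb2) _) hc
        exact inner n.toNat n rfl
  intro n k
  exact main k.toNat k rfl n
end
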